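/- Let H and Γ be groups. Then genrk(H ≀ Γ) ≤ genrk(H) + genrk(Γ), where H ≀ Γ = (⊕_Γ H) ⋊ Γ is the restricted wreath product. -/

import Mathlib

open scoped commutatorElement in
/-- The mixed commutator length `cl_{G,N}` (∞ if not a product of mixed commutators). -/
noncomputable def clGN {G : Type*} [Group G] (N : Subgroup G) (x : G) : ℕ∞ :=
  sInf {n : ℕ∞ | ∃ k : ℕ, n = k ∧ ∃ g v : Fin k → G, (∀ i, v i ∈ N) ∧
    x = (List.ofFn fun i => ⁅g i, v i⁆).prod}

/-- The rank of a subgroup: minimal size of a generating set. -/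
noncomputable def rk {G : Type*} [Group G] (H : Subgroup G) : ℕ∞ :=
  sInf {n : ℕ∞ | ∃ S : Finset G, Subgroup.closure (S : Set G) = H ∧ n = S.card}

/-- The intermediate rank `intrk^Γ(Λ) = inf {rk Θ | Λ ≤ Θ ≤ Γ}`. -/
noncomputable def intrk {G : Type*} [Group G] (Λ : Subgroup G) : ℕ∞ :=
  sInf {n : ℕ∞ | ∃ Θ : Subgroup G, Λ ≤ Θ ∧ n = rk Θ}

/-- The general rank in the sense of Malcev. -/
noncomputable def genrk (G : Type*) [Group G] : ℕ∞ :=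
  sSup {n : ℕ∞ | ∃ Λ : Subgroup G, Λ.FG ∧ n = intrk Λ}

/-- The special rank in the sense of Malcev. -/
noncomputable def sperk (G : Type*) [Group G] : ℕ∞ :=
  sSup {n : ℕ∞ | ∃ Λ : Subgroup G, Λ.FG ∧ n = rk Λ}

variable (H : Type*) [Group H] (Γ : Type*) [Group Γ]

/-- The shift action of `Γ` on `Γ → H`. -/
def shiftPi : Γ →* MulAut (Γ → H) where
  toFun γ :=
    { toFun := fun f x => f (γ⁻¹ * x)
      invFun := fun f x => f (γ * x)
      left_inv := fun f => by funext x; simp [mul_assoc]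
      right_inv := fun f => by funext x; simp [← mul_assoc]
      map_mul' := fun f g => rfl }
  map_one' := by ext f x; simp
  map_mul' γ γ' := by ext f x; simp [mul_assoc]

/-- The restricted wreath product `H ≀ Γ`, realized as the subgroup of the unrestricted
wreath product `(Γ → H) ⋊ Γ` consisting of elements with finitely supported function part. -/
def restrictedWreath : Subgroup (SemidirectProduct (Γ → H) Γ (shiftPi H Γ)) where
  carrier := {p | (Function.mulSupport p.left).Finite}
  one_mem' := by simp [Function.mulSupport]
  mul_mem' := by
    intro a b ha hb
    have h2 : (Function.mulSupport ((shiftPi H Γ a.right) b.left)).Finite := by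
      refine Set.Finite.subset (hb.image (fun x => a.right * x)) ?_
      intro x hx
      exact ⟨a.right⁻¹ * x, hx, by group⟩
    refine Set.Finite.subset (ha.union h2) ?_
    have := Function.mulSupport_mul a.left ((shiftPi H Γ a.right) b.left)
    simpa [SemidirectProduct.mul_left] using this
  inv_mem' := by
    intro a ha
    have h : Function.mulSupport ((shiftPi H Γ a.right⁻¹) a.left⁻¹) ⊆
        (fun x => a.right⁻¹ * x) '' Function.mulSupport a.left := by
      intro x hx
      refine ⟨a.right * x, ?_, by group⟩
      simp only [Function.mem_mulSupport] at hx ⊢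
      simpa [shiftPi] using hx
    have : (Function.mulSupport ((shiftPi H Γ a.right⁻¹) a.left⁻¹)).Finite :=
      Set.Finite.subset (ha.image (fun x => a.right⁻¹ * x)) h
    simpa [SemidirectProduct.inv_left, Set.mem_setOf_eq] using this


open Function SemidirectProduct Subgroup in
theorem test : True := trivial

section Aux
open Function SemidirectProduct Subgroup

variable {H Γ}

lemma shift_apply (γ : Γ) (f : Γ → H) (x : Γ) : (shiftPi H Γ γ) f x = f (γ⁻¹ * x) := rfl

lemma shift_inv_apply (γ : Γ) (f : Γ → H) (x : Γ) : ((shiftPi H Γ γ)⁻¹) f x = f (γ * x) := rfl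

/-- Elements with right part in `ΘΓ`, values in `ΘH`, support inside `ΘΓ`. -/
def mix0 (ΘH : Subgroup H) (ΘΓ : Subgroup Γ) :
    Subgroup (SemidirectProduct (Γ → H) Γ (shiftPi H Γ)) where
  carrier := {p | p.right ∈ ΘΓ ∧ (∀ x, p.left x ∈ ΘH) ∧ ∀ x, x ∉ ΘΓ → p.left x = 1}
  one_mem' := ⟨one_mem _, fun x => by simp [one_mem], fun x _ => rfl⟩
  mul_mem' := by
    rintro a b ⟨ha1, ha2, ha3⟩ ⟨hb1, hb2, hb3⟩
    refine ⟨mul_mem ha1 hb1, fun x => ?_, fun x hx => ?_⟩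
    · simp only [mul_left, Pi.mul_apply, shift_apply]
      exact mul_mem (ha2 x) (hb2 _)
    · simp only [mul_left, Pi.mul_apply, shift_apply]
      rw [ha3 x hx, hb3, one_mul]
      intro hmem
      exact hx (by simpa using mul_mem ha1 hmem)
  inv_mem' := by
    rintro a ⟨ha1, ha2, ha3⟩
    refine ⟨inv_mem ha1, fun x => ?_, fun x hx => ?_⟩
    · simp only [inv_left, map_inv, Pi.inv_apply, shift_inv_apply]
      exact inv_mem (ha2 _)
    · simp only [inv_left, map_inv, Pi.inv_apply, shift_inv_apply]
      rw [ha3, inv_one]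
      intro hmem
      exact hx (by simpa using mul_mem (inv_mem ha1) hmem)


attribute [local instance] Classical.propDecidable

/-- Embedding of `H` at the identity coordinate. -/
noncomputable def deltaHom : H →* SemidirectProduct (Γ → H) Γ (shiftPi H Γ) where
  toFun h := inl (fun x => if x = 1 then h else 1)
  map_one' := by
    show inl (fun x : Γ => if x = 1 then (1:H) else 1) = 1
    have h1 : (fun x : Γ => if x = 1 then (1:H) else 1) = (1 : Γ → H) := by
      funext x; split <;> rfl
    rw [h1, map_one]
  map_mul' a b := by
    show inl (fun x : Γ => if x = 1 then a * b else 1) =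
      inl (fun x : Γ => if x = 1 then a else 1) * inl (fun x : Γ => if x = 1 then b else 1)
    rw [← map_mul]
    congr 1
    funext x
    by_cases hx : x = 1 <;> simp [hx]

lemma mix_eq_closure (ΘH : Subgroup H) (ΘΓ : Subgroup Γ) (SH : Set H) (SΓ : Set Γ)
    (hSH : closure SH = ΘH) (hSΓ : closure SΓ = ΘΓ) :
    restrictedWreath H Γ ⊓ mix0 ΘH ΘΓ =
      closure (deltaHom '' SH ∪ inr '' SΓ :
        Set (SemidirectProduct (Γ → H) Γ (shiftPi H Γ))) := by
  set S : Set (SemidirectProduct (Γ → H) Γ (shiftPi H Γ)) := deltaHom '' SH ∪ inr '' SΓ with hS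
  apply le_antisymm
  · -- the hard direction
    have inr_mem : ∀ γ ∈ ΘΓ, (inr γ : SemidirectProduct (Γ → H) Γ (shiftPi H Γ)) ∈ closure S := by
      intro γ hγ
      have : closure SΓ ≤ Subgroup.comap (inr : Γ →* _) (closure S) :=
        (closure_le _).2 (fun s hs => subset_closure (Or.inr ⟨s, hs, rfl⟩))
      exact this (hSΓ ▸ hγ)
    have single_mem : ∀ x ∈ ΘΓ, ∀ h ∈ ΘH,
        (inl (fun y => if y = x then h else 1) :
          SemidirectProduct (Γ → H) Γ (shiftPi H Γ)) ∈ closure S := by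
      intro x hx h hh
      have key : ∀ h' : H, (inl (fun y => if y = x then h' else 1) :
          SemidirectProduct (Γ → H) Γ (shiftPi H Γ)) = inr x * deltaHom h' * (inr x)⁻¹ := by
        intro h'
        have := SemidirectProduct.inl_aut (φ := shiftPi H Γ) x
          (fun y => if y = 1 then h' else 1)
        show _ = inr x * inl (fun y : Γ => if y = 1 then h' else 1) * (inr x)⁻¹
        rw [← map_inv, ← this]
        congr 1
        funext y
        have : ((shiftPi H Γ) x) (fun y => if y = 1 then h' else 1) y
            = if x⁻¹ * y = 1 then h' else 1 := rfl
        rw [this]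
        congr 1
        simp [inv_mul_eq_one, eq_comm]
      have : closure SH ≤ Subgroup.comap
          ((MulAut.conj (inr x : SemidirectProduct (Γ → H) Γ (shiftPi H Γ))).toMonoidHom.comp
            deltaHom) (closure S) := by
        refine (closure_le _).2 (fun s hs => ?_)
        have hδ : (deltaHom s : SemidirectProduct (Γ → H) Γ (shiftPi H Γ)) ∈ closure S :=
          subset_closure (Or.inl ⟨s, hs, rfl⟩)
        simpa [MulAut.conj_apply] using
          mul_mem (mul_mem (inr_mem x hx) hδ) (inv_mem (inr_mem x hx))
      have hmem := this (hSH ▸ hh)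
      rw [Subgroup.mem_comap] at hmem
      simpa [MulAut.conj_apply, ← key h] using hmem
    rintro p ⟨hfin, hr, hv, hsupp⟩
    have main : ∀ (s : Finset Γ) (f : Γ → H), (Function.mulSupport f ⊆ s) →
        (∀ x, f x ∈ ΘH) → (∀ x ∉ ΘΓ, f x = 1) →
        (inl f : SemidirectProduct (Γ → H) Γ (shiftPi H Γ)) ∈ closure S := by
      intro s
      induction s using Finset.induction_on with
      | empty =>
        intro f hsup _ _
        have : f = 1 := by
          funext x
          by_contra hx
          exact absurd (hsup hx) (by simp)
        rw [this, map_one]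
        exact one_mem _
      | insert a s ha ih =>
        intro f hsup hv1 hs1
        set g : Γ → H := Function.update f a 1 with hg
        have hfg : f = (fun y => if y = a then f a else 1) * g := by
          funext y
          by_cases hy : y = a
          · subst hy; simp [hg]
          · simp [hg, hy, Function.update_of_ne hy]
        have hg_mem : (inl g : SemidirectProduct (Γ → H) Γ (shiftPi H Γ)) ∈ closure S := by
          refine ih g (fun y hy => ?_) (fun y => ?_) (fun y hy => ?_)
          · have hya : y ≠ a := by
              intro h; apply hy; subst h; simp [hg]
            have : y ∈ Function.mulSupport f := by
              simpa [hg, Function.update_of_ne hya] using hy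
            rcases Finset.mem_insert.1 (hsup this) with h | h
            · exact absurd h hya
            · exact h
          · by_cases hy : y = a
            · subst hy; simp [hg, one_mem]
            · simpa [hg, Function.update_of_ne hy] using hv1 y
          · by_cases hya : y = a
            · subst hya; simp [hg]
            · simp [hg, Function.update_of_ne hya, hs1 y hy]
        have hsingle : (inl (fun y => if y = a then f a else 1) :
            SemidirectProduct (Γ → H) Γ (shiftPi H Γ)) ∈ closure S := by
          by_cases haΓ : a ∈ ΘΓ
          · exact single_mem a haΓ (f a) (hv1 a)
          · have : (fun y => if y = a then f a else 1) = (1 : Γ → H) := by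
              funext z
              by_cases hz : z = a
              · rw [if_pos hz]; exact hs1 a haΓ
              · rw [if_neg hz]; rfl
            rw [this, map_one]; exact one_mem _
        rw [hfg, map_mul]
        exact mul_mem hsingle hg_mem
    have hp : p = inl p.left * inr p.right := (inl_left_mul_inr_right p).symm
    rw [hp]
    exact mul_mem (main hfin.toFinset p.left (fun x hx => hfin.mem_toFinset.2 hx) hv hsupp)
      (inr_mem _ hr)
  · refine (closure_le _).2 ?_
    rintro x (⟨h, hh, rfl⟩ | ⟨γ, hγ, rfl⟩)
    · refine ⟨?_, ?_, fun y => ?_, fun y hy => ?_⟩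
      · show (Function.mulSupport (deltaHom h).left).Finite
        refine Set.Finite.subset (Set.finite_singleton 1) (fun y hy => ?_)
        simp only [Function.mem_mulSupport] at hy
        by_contra hne
        exact hy (by simp [deltaHom, show y ≠ 1 from fun h' => hne (by simp [h'])])
      · show (deltaHom h).right ∈ ΘΓ
        simp [deltaHom, one_mem]
      · show (deltaHom h).left y ∈ ΘH
        by_cases hy : y = 1
        · simpa [deltaHom, hy] using (hSH ▸ subset_closure hh : h ∈ ΘH)
        · simp [deltaHom, hy, one_mem]
      · show (deltaHom h).left y = 1
        have : y ≠ 1 := fun h' => hy (h' ▸ one_mem ΘΓ)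
        simp [deltaHom, this]
    · refine ⟨?_, ?_, fun y => ?_, fun y hy => ?_⟩
      · show (Function.mulSupport (inr γ : SemidirectProduct (Γ → H) Γ (shiftPi H Γ)).left).Finite
        simp [Function.mulSupport]
      · simpa using (hSΓ ▸ subset_closure hγ : γ ∈ ΘΓ)
      · simp [one_mem]
      · simp

lemma mem_restrictedWreath_iff (p : SemidirectProduct (Γ → H) Γ (shiftPi H Γ)) :
    p ∈ restrictedWreath H Γ ↔ (Function.mulSupport p.left).Finite := Iff.rfl

lemma deltaHom_mem (h : H) : (deltaHom h : SemidirectProduct (Γ → H) Γ (shiftPi H Γ)) ∈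
    restrictedWreath H Γ := by
  rw [mem_restrictedWreath_iff]
  refine Set.Finite.subset (Set.finite_singleton 1) (fun y hy => ?_)
  simp only [Function.mem_mulSupport] at hy
  by_contra hne
  exact hy (by simp [deltaHom, show y ≠ 1 from fun h' => hne (by simp [h'])])

lemma inr_mem_restrictedWreath (γ : Γ) :
    (inr γ : SemidirectProduct (Γ → H) Γ (shiftPi H Γ)) ∈ restrictedWreath H Γ := by
  rw [mem_restrictedWreath_iff]
  simp [Function.mulSupport]

end Aux

open SemidirectProduct in
theorem genrk_wreath_le_aux : genrk ↥(restrictedWreath H Γ) ≤ genrk H + genrk Γ := by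
  classical
  by_cases hH : genrk H = ⊤
  · rw [hH, top_add]; exact le_top
  by_cases hG : genrk Γ = ⊤
  · rw [hG, add_top]; exact le_top
  set W := restrictedWreath H Γ with hW
  refine sSup_le ?_
  rintro n ⟨Λ, hΛfg, rfl⟩
  obtain ⟨X, hX⟩ := hΛfg
  -- finite generating sets of the "shadow" subgroups
  set SΓ0 : Set Γ :=
    ⋃ p ∈ (X : Set ↥W), insert (p : SemidirectProduct (Γ → H) Γ (shiftPi H Γ)).right
      (Function.mulSupport (p : SemidirectProduct (Γ → H) Γ (shiftPi H Γ)).left) with hSΓ0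
  set SH0 : Set H :=
    ⋃ p ∈ (X : Set ↥W), insert (1 : H)
      ((p : SemidirectProduct (Γ → H) Γ (shiftPi H Γ)).left ''
        Function.mulSupport (p : SemidirectProduct (Γ → H) Γ (shiftPi H Γ)).left) with hSH0
  have hfinsupp : ∀ p : ↥W,
      (Function.mulSupport (p : SemidirectProduct (Γ → H) Γ (shiftPi H Γ)).left).Finite :=
    fun p => (mem_restrictedWreath_iff _).1 p.2
  have hSΓ0fin : SΓ0.Finite :=
    Set.Finite.biUnion X.finite_toSet (fun p _ => ((hfinsupp p).insert _))
  have hSH0fin : SH0.Finite :=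
    Set.Finite.biUnion X.finite_toSet (fun p _ => (((hfinsupp p).image _).insert _))
  set ΛΓ : Subgroup Γ := Subgroup.closure SΓ0 with hΛΓ
  set ΛH : Subgroup H := Subgroup.closure SH0 with hΛH
  have hΛΓfg : ΛΓ.FG := (Subgroup.fg_iff _).2 ⟨SΓ0, rfl, hSΓ0fin⟩
  have hΛHfg : ΛH.FG := (Subgroup.fg_iff _).2 ⟨SH0, rfl, hSH0fin⟩
  have hintH : intrk ΛH ≤ genrk H := le_sSup ⟨ΛH, hΛHfg, rfl⟩
  have hintG : intrk ΛΓ ≤ genrk Γ := le_sSup ⟨ΛΓ, hΛΓfg, rfl⟩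
  -- choose minimizing overgroups
  have hneH' : {n : ℕ∞ | ∃ Θ : Subgroup H, ΛH ≤ Θ ∧ n = rk Θ}.Nonempty :=
    ⟨rk ⊤, ⊤, le_top, rfl⟩
  have hneG' : {n : ℕ∞ | ∃ Θ : Subgroup Γ, ΛΓ ≤ Θ ∧ n = rk Θ}.Nonempty :=
    ⟨rk ⊤, ⊤, le_top, rfl⟩
  obtain ⟨ΘH, hΘHle, hΘHrk⟩ :
      ∃ Θ : Subgroup H, ΛH ≤ Θ ∧ intrk ΛH = rk Θ :=
    csInf_mem hneH'
  obtain ⟨ΘΓ, hΘΓle, hΘΓrk⟩ :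
      ∃ Θ : Subgroup Γ, ΛΓ ≤ Θ ∧ intrk ΛΓ = rk Θ :=
    csInf_mem hneG'
  have hrkH_le : rk ΘH ≤ genrk H := hΘHrk ▸ hintH
  have hrkG_le : rk ΘΓ ≤ genrk Γ := hΘΓrk ▸ hintG
  -- choose minimizing finite generating sets
  have hneH : {n : ℕ∞ | ∃ S : Finset H, Subgroup.closure (S : Set H) = ΘH ∧ n = S.card}.Nonempty := by
    by_contra hx
    rw [Set.not_nonempty_iff_eq_empty] at hx
    have : rk ΘH = ⊤ := by rw [rk, hx, sInf_empty]
    exact hH (top_le_iff.1 (this ▸ hrkH_le))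
  have hneG : {n : ℕ∞ | ∃ S : Finset Γ, Subgroup.closure (S : Set Γ) = ΘΓ ∧ n = S.card}.Nonempty := by
    by_contra hx
    rw [Set.not_nonempty_iff_eq_empty] at hx
    have : rk ΘΓ = ⊤ := by rw [rk, hx, sInf_empty]
    exact hG (top_le_iff.1 (this ▸ hrkG_le))
  obtain ⟨SHf, hSHfcl, hSHfcard⟩ :
      ∃ S : Finset H, Subgroup.closure (S : Set H) = ΘH ∧ rk ΘH = (S.card : ℕ∞) := csInf_mem hneH
  obtain ⟨SΓf, hSΓfcl, hSΓfcard⟩ :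
      ∃ S : Finset Γ, Subgroup.closure (S : Set Γ) = ΘΓ ∧ rk ΘΓ = (S.card : ℕ∞) := csInf_mem hneG
  -- the generating set of the intermediate subgroup upstairs
  set δW : H →* ↥W := (deltaHom).codRestrict W (deltaHom_mem) with hδW
  set ιW : Γ →* ↥W := (inr : Γ →* _).codRestrict W (inr_mem_restrictedWreath) with hιW
  set T : Finset ↥W := SHf.image δW ∪ SΓf.image ιW with hT
  have hinj : Function.Injective W.subtype := Subgroup.subtype_injective W
  have himage : W.subtype '' (T : Set ↥W) =
      (deltaHom '' (SHf : Set H) ∪ inr '' (SΓf : Set Γ) :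
        Set (SemidirectProduct (Γ → H) Γ (shiftPi H Γ))) := by
    rw [hT, Finset.coe_union, Finset.coe_image, Finset.coe_image, Set.image_union,
      ← Set.image_comp, ← Set.image_comp]
    rfl
  have hkey : Subgroup.map W.subtype (Subgroup.closure (T : Set ↥W)) = W ⊓ mix0 ΘH ΘΓ := by
    rw [MonoidHom.map_closure, himage, mix_eq_closure ΘH ΘΓ _ _ hSHfcl hSΓfcl]
  set Θ : Subgroup ↥W := Subgroup.comap W.subtype (W ⊓ mix0 ΘH ΘΓ) with hΘ
  have hTcl : Subgroup.closure (T : Set ↥W) = Θ := by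
    rw [hΘ, ← hkey, Subgroup.comap_map_eq_self_of_injective hinj]
  -- Λ ≤ Θ
  have hΛΘ : Λ ≤ Θ := by
    rw [← hX]
    refine (Subgroup.closure_le _).2 (fun x hx => ?_)
    have hxX : x ∈ (X : Set ↥W) := hx
    have hgoal : (x : SemidirectProduct (Γ → H) Γ (shiftPi H Γ)) ∈ W ⊓ mix0 ΘH ΘΓ := by
      refine Subgroup.mem_inf.2 ⟨x.2, ?_, fun y => ?_, fun y hy => ?_⟩
      · refine hΘΓle (Subgroup.subset_closure ?_)
        exact Set.mem_biUnion hxX (Set.mem_insert _ _)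
      · by_cases hy : y ∈ Function.mulSupport
          (x : SemidirectProduct (Γ → H) Γ (shiftPi H Γ)).left
        · refine hΘHle (Subgroup.subset_closure ?_)
          exact Set.mem_biUnion hxX (Set.mem_insert_of_mem _ ⟨y, hy, rfl⟩)
        · rw [Function.notMem_mulSupport.1 hy]
          exact one_mem _
      · by_contra hne
        have : y ∈ Function.mulSupport (x : SemidirectProduct (Γ → H) Γ (shiftPi H Γ)).left := hne
        exact hy (hΘΓle (Subgroup.subset_closure
          (Set.mem_biUnion hxX (Set.mem_insert_of_mem _ this))))
    exact Subgroup.mem_comap.2 hgoal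
  -- rank bounds
  have h1 : intrk Λ ≤ rk Θ := sInf_le ⟨Θ, hΛΘ, rfl⟩
  have h2 : rk Θ ≤ (T.card : ℕ∞) := sInf_le ⟨T, hTcl, rfl⟩
  have h3 : (T.card : ℕ∞) ≤ (SHf.card : ℕ∞) + (SΓf.card : ℕ∞) := by
    have : T.card ≤ SHf.card + SΓf.card :=
      le_trans (Finset.card_union_le _ _)
        (add_le_add (Finset.card_image_le) (Finset.card_image_le))
    exact_mod_cast this
  calc intrk Λ ≤ (SHf.card : ℕ∞) + (SΓf.card : ℕ∞) := le_trans h1 (le_trans h2 h3)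
    _ = rk ΘH + rk ΘΓ := by rw [hSHfcard, hSΓfcard]
    _ ≤ genrk H + genrk Γ := add_le_add hrkH_le hrkG_le


/-- subadditivity of the general rank for restricted wreath products. -/
theorem genrk_wreath_le : genrk ↥(restrictedWreath H Γ) ≤ genrk H + genrk Γ :=
  genrk_wreath_le_aux H Γ
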